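/- Under the sensor setup, posterior definitions, and network setup, suppose there is a single real symmetric positive semidefinite n×n matrix M such that H_j^T (R_j^u)^{-1} R_j (R_j^u)^{-1} H_j = M for every j ∈ {1,…,N}. Then for all integers m ≥ d ≥ 1: 0 ⪯ Φ^{ts(m)} ⪯ Φ^{ts(d)}, and Σ^{t(m)} ⪰ Σ^{(m)}, where the superscript (m) indicates the quantity computed with the fusion weights a_j^{(m)} = N·[𝓛^m]_{ij}. (Corollary 1 of the paper.) -/

import Mathlib

open Matrix

lemma myPSD_smul {k : ℕ} {c : ℝ} (hc : 0 ≤ c) {A : Matrix (Fin k) (Fin k) ℝ}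
    (hA : A.PosSemidef) : (c • A).PosSemidef := by
  refine ⟨?_, fun x => ?_⟩
  · rw [IsHermitian, conjTranspose_smul, hA.1.eq, star_trivial]
  · have h := mul_nonneg hc (hA.2 x)
    simp only [Finsupp.sum, Finset.mul_sum, Matrix.smul_apply, smul_eq_mul] at h ⊢
    exact le_of_le_of_eq h (Finset.sum_congr rfl fun _ _ => Finset.sum_congr rfl fun _ _ => by ring)

lemma myPSD_sum {k : ℕ} {N : ℕ} (f : Fin N → Matrix (Fin k) (Fin k) ℝ)
    (h : ∀ j, (f j).PosSemidef) : (∑ j, f j).PosSemidef :=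
  Finset.sum_induction f _ (fun _ _ ha hb => ha.add hb) Matrix.PosSemidef.zero
    (fun j _ => h j)

lemma myHtAH {k n : ℕ} {A : Matrix (Fin k) (Fin k) ℝ} (hA : A.PosSemidef)
    (H : Matrix (Fin k) (Fin n) ℝ) : (Hᵀ * A * H).PosSemidef := by
  have := hA.mul_mul_conjTranspose_same Hᵀ
  rwa [conjTranspose_eq_transpose_of_trivial, transpose_transpose] at this

lemma myABBA {k m : ℕ} {A : Matrix (Fin k) (Fin k) ℝ} (hA : A.PosSemidef)
    (B : Matrix (Fin m) (Fin k) ℝ) (C : Matrix (Fin k) (Fin m) ℝ)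
    (hC : Bᴴ = C) : (B * A * C).PosSemidef := by
  rw [← hC]; exact hA.mul_mul_conjTranspose_same B

/-- Corollary 1 of the paper: if `Hⱼᵀ (Rⱼᵘ)⁻¹ Rⱼ (Rⱼᵘ)⁻¹ Hⱼ = M` for all sensors `j`,
then for all `m ≥ d ≥ 1`, `0 ⪯ Φ^{ts(m)} ⪯ Φ^{ts(d)}` and `Σ^{t(m)} ⪰ Σ^{(m)}`,
with the consensus weights `a_j^{(m)} = N [𝓛^m]_{ij}`. -/
theorem stmt11 {n N : ℕ} (hn : 1 ≤ n) (hN : 1 ≤ N)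
    (md : Fin N → ℕ) (hmd : ∀ j, 1 ≤ md j)
    (H : ∀ j, Matrix (Fin (md j)) (Fin n) ℝ)
    (R Ru : ∀ j, Matrix (Fin (md j)) (Fin (md j)) ℝ)
    (hRsymm : ∀ j, (R j).IsSymm) (hRusymm : ∀ j, (Ru j).IsSymm)
    (hR : ∀ j, (R j).PosDef) (hRu : ∀ j, (Ru j).PosDef)
    (P dQ : Matrix (Fin n) (Fin n) ℝ) (hPsymm : P.IsSymm) (hP : P.PosDef)
    (hdQsymm : dQ.IsSymm)
    (Pf : Matrix (Fin n) (Fin n) ℝ) (hPfdef : Pf = P + dQ) (hPf : Pf.PosDef)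
    (W : Matrix (Fin N) (Fin N) ℝ)
    (hnonneg : ∀ p q, 0 ≤ W p q)
    (hrow : ∀ p, ∑ q, W p q = 1)
    (hcol : ∀ q, ∑ p, W p q = 1)
    (hdiag : ∀ p, 0 < W p p)
    (hconn : ∀ p q, ∃ m : ℕ, 0 < (W ^ m) p q)
    (i : Fin N)
    (M : Matrix (Fin n) (Fin n) ℝ) (hM : M.PosSemidef)
    (hMeq : ∀ j, (H j)ᵀ * (Ru j)⁻¹ * R j * (Ru j)⁻¹ * H j = M)
    (Phits Phi Phif Phit Sig Sigf Sigt : (Fin N → ℝ) → Matrix (Fin n) (Fin n) ℝ)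
    (hPhits : ∀ a, Phits a =
      ∑ j, ((a j) ^ 2 - a j) • ((H j)ᵀ * (Ru j)⁻¹ * R j * (Ru j)⁻¹ * H j))
    (hPhi : ∀ a, Phi a = ∑ j, a j • ((H j)ᵀ * (R j)⁻¹ * H j))
    (hPhif : ∀ a, Phif a = ∑ j, a j • ((H j)ᵀ * (Ru j)⁻¹ * H j))
    (hPhit : ∀ a, Phit a =
      ∑ j, (a j) ^ 2 • ((H j)ᵀ * (Ru j)⁻¹ * R j * (Ru j)⁻¹ * H j))
    (hSig : ∀ a, Sig a = (P⁻¹ + Phi a)⁻¹)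
    (hSigf : ∀ a, Sigf a = (Pf⁻¹ + Phif a)⁻¹)
    (hSigt : ∀ a, Sigt a =
      Sigf a * Pf⁻¹ * P * Pf⁻¹ * Sigf a + Sigf a * Phit a * Sigf a) :
    ∀ d m : ℕ, 1 ≤ d → d ≤ m →
      (Phits (fun j => (N : ℝ) * (W ^ m) i j)).PosSemidef ∧
      (Phits (fun j => (N : ℝ) * (W ^ d) i j)
        - Phits (fun j => (N : ℝ) * (W ^ m) i j)).PosSemidef ∧
      (Sigt (fun j => (N : ℝ) * (W ^ m) i j)
        - Sig (fun j => (N : ℝ) * (W ^ m) i j)).PosSemidef := by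
  -- Facts about powers of the doubly stochastic matrix `W`.
  have hpow_nonneg : ∀ (k : ℕ) p q, 0 ≤ (W ^ k) p q := by
    intro k
    induction k with
    | zero => intro p q; simp [Matrix.one_apply]; positivity
    | succ k ih =>
      intro p q
      rw [pow_succ, Matrix.mul_apply]
      exact Finset.sum_nonneg fun r _ => mul_nonneg (ih p r) (hnonneg r q)
  have hpow_row : ∀ (k : ℕ) p, ∑ q, (W ^ k) p q = 1 := by
    intro k
    induction k with
    | zero => intro p; simp [Matrix.one_apply]
    | succ k ih =>
      intro p
      simp only [pow_succ, Matrix.mul_apply]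
      rw [Finset.sum_comm]
      calc ∑ r, ∑ q, (W ^ k) p r * W r q
          = ∑ r, (W ^ k) p r * ∑ q, W r q := by simp [Finset.mul_sum]
        _ = 1 := by simp [hrow, ih]
  set s : ℕ → ℝ := fun k => ∑ j, ((W ^ k) i j) ^ 2 with hs
  have hs_lb : ∀ k, 1 ≤ (N : ℝ) * s k := by
    intro k
    have hcs := Finset.sum_mul_sq_le_sq_mul_sq Finset.univ
      (fun j => (W ^ k) i j) (fun _ => (1 : ℝ))
    simp only [mul_one, one_pow, hpow_row k i, Finset.sum_const,
      Finset.card_univ, Fintype.card_fin, nsmul_eq_mul, one_pow] at hcs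
    simp only [hs]
    rw [mul_comm]
    exact hcs
  have hs_succ : ∀ k, s (k + 1) ≤ s k := by
    intro k
    have hper : ∀ j, ((W ^ (k+1)) i j) ^ 2 ≤ ∑ r, ((W ^ k) i r) ^ 2 * W r j := by
      intro j
      have hcs := Finset.sum_mul_sq_le_sq_mul_sq Finset.univ
        (fun r => (W ^ k) i r * Real.sqrt (W r j)) (fun r => Real.sqrt (W r j))
      have h1 : ∀ r, (W ^ k) i r * Real.sqrt (W r j) * Real.sqrt (W r j)
          = (W ^ k) i r * W r j := by
        intro r; rw [mul_assoc, Real.mul_self_sqrt (hnonneg r j)]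
      have h2 : ∀ r, ((W ^ k) i r * Real.sqrt (W r j)) ^ 2
          = ((W ^ k) i r) ^ 2 * W r j := by
        intro r; rw [mul_pow, Real.sq_sqrt (hnonneg r j)]
      simp only [h1, h2, Real.sq_sqrt (hnonneg _ j)] at hcs
      calc ((W ^ (k+1)) i j) ^ 2 = (∑ r, (W ^ k) i r * W r j) ^ 2 := by
            rw [show W ^ (k+1) = W ^ k * W from pow_succ W k, Matrix.mul_apply]
        _ ≤ (∑ r, ((W ^ k) i r) ^ 2 * W r j) * ∑ r, W r j := hcs
        _ = ∑ r, ((W ^ k) i r) ^ 2 * W r j := by rw [hcol j, mul_one]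
    calc s (k+1) ≤ ∑ j, ∑ r, ((W ^ k) i r) ^ 2 * W r j :=
          Finset.sum_le_sum fun j _ => hper j
      _ = ∑ r, ((W ^ k) i r) ^ 2 * ∑ j, W r j := by
          rw [Finset.sum_comm]; simp [Finset.mul_sum]
      _ = s k := by simp [hrow, hs]
  have hs_anti : ∀ d m : ℕ, d ≤ m → s m ≤ s d :=
    fun d m h => antitone_nat_of_succ_le hs_succ h
  -- Facts about the weights
  have hNpos : (0:ℝ) < N := by exact_mod_cast hN
  have hasum : ∀ k : ℕ, ∑ j, (N : ℝ) * (W ^ k) i j = N := by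
    intro k
    rw [← Finset.mul_sum, hpow_row k i, mul_one]
  have hasq : ∀ k : ℕ, ∑ j, ((N : ℝ) * (W ^ k) i j) ^ 2 = (N:ℝ)^2 * s k := by
    intro k
    simp only [hs, Finset.mul_sum, mul_pow]
  have hcval : ∀ k : ℕ, ∑ j, (((N : ℝ) * (W ^ k) i j) ^ 2 - (N : ℝ) * (W ^ k) i j)
      = (N:ℝ)^2 * s k - N := by
    intro k
    rw [Finset.sum_sub_distrib, hasq k, hasum k]
  have hcnonneg : ∀ k : ℕ, 0 ≤ ∑ j, (((N : ℝ) * (W ^ k) i j) ^ 2 - (N : ℝ) * (W ^ k) i j) := by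
    intro k
    rw [hcval k]
    have := hs_lb k
    nlinarith
  -- Phits collapses to a scalar multiple of M
  have hPhitsM : ∀ a : Fin N → ℝ, Phits a = (∑ j, ((a j) ^ 2 - a j)) • M := by
    intro a
    rw [hPhits a]
    simp only [hMeq]
    rw [← Finset.sum_smul]
  intro d m hd hdm
  refine ⟨?_, ?_, ?_⟩
  · rw [hPhitsM]
    exact myPSD_smul (hcnonneg m) hM
  · rw [hPhitsM, hPhitsM, ← sub_smul]
    refine myPSD_smul ?_ hM
    rw [hcval, hcval]
    have := hs_anti d m hdm
    nlinarith
  · -- The main inequality Σᵗ ⪰ Σ.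
    set a : Fin N → ℝ := fun j => (N : ℝ) * (W ^ m) i j with ha
    have ha0 : ∀ j, 0 ≤ a j := fun j => mul_nonneg hNpos.le (hpow_nonneg m i j)
    have hc : 0 ≤ ∑ j, ((a j) ^ 2 - a j) := hcnonneg m
    -- positive definiteness of the information matrices
    have hPhiPSD : (Phi a).PosSemidef := by
      rw [hPhi]
      exact myPSD_sum _ fun j => myPSD_smul (ha0 j) (myHtAH (hR j).inv.posSemidef (H j))
    have hPhifPSD : (Phif a).PosSemidef := by
      rw [hPhif]
      exact myPSD_sum _ fun j => myPSD_smul (ha0 j) (myHtAH (hRu j).inv.posSemidef (H j))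
    have hX : (P⁻¹ + Phi a).PosDef := hP.inv.add_posSemidef hPhiPSD
    have hXf : (Pf⁻¹ + Phif a).PosDef := hPf.inv.add_posSemidef hPhifPSD
    have hXdet : IsUnit (P⁻¹ + Phi a).det := (isUnit_iff_ne_zero.mpr hX.det_pos.ne')
    have hXfdet : IsUnit (Pf⁻¹ + Phif a).det := (isUnit_iff_ne_zero.mpr hXf.det_pos.ne')
    have hS : (Sig a).PosDef := by rw [hSig]; exact hX.inv
    have hSf : (Sigf a).PosDef := by rw [hSigf]; exact hXf.inv
    set S := Sig a with hSdef
    set Sf := Sigf a with hSfdef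
    have eS1 : S * (P⁻¹ + Phi a) = 1 := by
      rw [hSdef, hSig]; exact Matrix.nonsing_inv_mul _ hXdet
    have eS2 : (P⁻¹ + Phi a) * S = 1 := by
      rw [hSdef, hSig]; exact Matrix.mul_nonsing_inv _ hXdet
    have eSf1 : Sf * (Pf⁻¹ + Phif a) = 1 := by
      rw [hSfdef, hSigf]; exact Matrix.nonsing_inv_mul _ hXfdet
    have eSf2 : (Pf⁻¹ + Phif a) * Sf = 1 := by
      rw [hSfdef, hSigf]; exact Matrix.mul_nonsing_inv _ hXfdet
    -- hermitian facts
    have hSh : Sᴴ = S := hS.isHermitian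
    have hSfh : Sfᴴ = Sf := hSf.isHermitian
    have hPinvh : (P⁻¹)ᴴ = P⁻¹ := hP.inv.isHermitian
    have hPfinvh : (Pf⁻¹)ᴴ = Pf⁻¹ := hPf.inv.isHermitian
    have hconjH : ∀ j, ((H j)ᵀ)ᴴ = H j := fun j => by
      rw [conjTranspose_eq_transpose_of_trivial, transpose_transpose]
    have hPdet : IsUnit P.det := (isUnit_iff_ne_zero.mpr hP.det_pos.ne')
    have hRdet : ∀ j, IsUnit (R j).det := fun j => (isUnit_iff_ne_zero.mpr (hR j).det_pos.ne')
    have hRudet : ∀ j, IsUnit (Ru j).det := fun j => (isUnit_iff_ne_zero.mpr (hRu j).det_pos.ne')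
    -- the error-difference matrices
    set At : Matrix (Fin n) (Fin n) ℝ := Sf * Pf⁻¹ - S * P⁻¹ with hAt
    set E : ∀ j, Matrix (Fin n) (Fin (md j)) ℝ :=
      fun j => Sf * (H j)ᵀ * (Ru j)⁻¹ - S * (H j)ᵀ * (R j)⁻¹ with hE
    have hAtH : Atᴴ = Pf⁻¹ * Sf - P⁻¹ * S := by
      simp only [hAt, conjTranspose_sub, conjTranspose_mul, hSh, hSfh, hPinvh, hPfinvh]
    have hEH : ∀ j, (E j)ᴴ = (Ru j)⁻¹ * (H j * Sf) - (R j)⁻¹ * (H j * S) := by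
      intro j
      simp only [hE, conjTranspose_sub, conjTranspose_mul, conjTranspose_nonsing_inv,
        (hRu j).isHermitian.eq, (hR j).isHermitian.eq, hconjH, hSh, hSfh, Matrix.mul_assoc]
    -- expansion of each sensor's error term
    have hEj : ∀ j, E j * R j * (E j)ᴴ
        = Sf * M * Sf - Sf * ((H j)ᵀ * (Ru j)⁻¹ * H j) * S
          - S * ((H j)ᵀ * (Ru j)⁻¹ * H j) * Sf + S * ((H j)ᵀ * (R j)⁻¹ * H j) * S := by
      intro j
      rw [hEH j, ← hMeq j]
      simp only [hE, Matrix.sub_mul, Matrix.mul_sub, Matrix.mul_assoc,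
        Matrix.mul_nonsing_inv_cancel_left _ _ (hRdet j),
        Matrix.nonsing_inv_mul_cancel_left _ _ (hRdet j)]
      abel
    -- expansion of the prior error term
    have hAtP : At * P * Atᴴ
        = Sf * Pf⁻¹ * P * Pf⁻¹ * Sf - Sf * Pf⁻¹ * S - S * Pf⁻¹ * Sf + S * P⁻¹ * S := by
      rw [hAtH]
      simp only [hAt, Matrix.sub_mul, Matrix.mul_sub, Matrix.mul_assoc,
        Matrix.mul_nonsing_inv_cancel_left _ _ hPdet,
        Matrix.nonsing_inv_mul_cancel_left _ _ hPdet]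
      abel
    -- sum of the sensor error terms
    have hEsum : ∑ j, a j • (E j * R j * (E j)ᴴ)
        = (∑ j, a j) • (Sf * M * Sf) - Sf * Phif a * S - S * Phif a * Sf
          + S * Phi a * S := by
      calc ∑ j, a j • (E j * R j * (E j)ᴴ)
          = ∑ j, (a j • (Sf * M * Sf) - Sf * (a j • ((H j)ᵀ * (Ru j)⁻¹ * H j)) * S
              - S * (a j • ((H j)ᵀ * (Ru j)⁻¹ * H j)) * Sf
              + S * (a j • ((H j)ᵀ * (R j)⁻¹ * H j)) * S) := by
            refine Finset.sum_congr rfl fun j _ => ?_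
            rw [hEj j]
            simp only [smul_sub, smul_add, Matrix.mul_smul, Matrix.smul_mul]
        _ = _ := by
            simp only [Finset.sum_add_distrib, Finset.sum_sub_distrib, ← Finset.sum_smul,
              ← Finset.mul_sum, ← Finset.sum_mul, hPhi, hPhif]
    -- Phit collapses
    have hPhitM : Sf * Phit a * Sf = (∑ j, (a j) ^ 2) • (Sf * M * Sf) := by
      rw [hPhit]
      simp only [hMeq]
      rw [← Finset.sum_smul, Matrix.mul_smul, Matrix.smul_mul]
    -- cancellation identities
    have e1 : Sf * Pf⁻¹ * S + Sf * Phif a * S = S := by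
      rw [← Matrix.add_mul, ← Matrix.mul_add, eSf1, Matrix.one_mul]
    have e2 : S * Pf⁻¹ * Sf + S * Phif a * Sf = S := by
      rw [Matrix.mul_assoc S, Matrix.mul_assoc S, ← Matrix.mul_add, ← Matrix.add_mul, eSf2,
        Matrix.mul_one]
    have e3 : S * P⁻¹ * S + S * Phi a * S = S := by
      rw [Matrix.mul_assoc S, Matrix.mul_assoc S, ← Matrix.mul_add, ← Matrix.add_mul, eS2,
        Matrix.mul_one]
    have e4 : (∑ j, a j) • (Sf * M * Sf) + (∑ j, ((a j) ^ 2 - a j)) • (Sf * M * Sf)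
        = (∑ j, (a j) ^ 2) • (Sf * M * Sf) := by
      rw [← add_smul, Finset.sum_sub_distrib]
      ring_nf
    -- the key identity
    have key : Sigt a - S
        = At * P * Atᴴ + (∑ j, a j • (E j * R j * (E j)ᴴ))
          + (∑ j, ((a j) ^ 2 - a j)) • (Sf * M * Sf) := by
      rw [hSigt a, hAtP, hEsum, ← hSfdef, hPhitM]
      rw [show Sf * Pf⁻¹ * P * Pf⁻¹ * Sf - Sf * Pf⁻¹ * S - S * Pf⁻¹ * Sf + S * P⁻¹ * S
          + ((∑ j, a j) • (Sf * M * Sf) - Sf * Phif a * S - S * Phif a * Sf + S * Phi a * S)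
          + (∑ j, ((a j) ^ 2 - a j)) • (Sf * M * Sf)
        = Sf * Pf⁻¹ * P * Pf⁻¹ * Sf
          + ((∑ j, a j) • (Sf * M * Sf) + (∑ j, ((a j) ^ 2 - a j)) • (Sf * M * Sf))
          - (Sf * Pf⁻¹ * S + Sf * Phif a * S) - (S * Pf⁻¹ * Sf + S * Phif a * Sf)
          + (S * P⁻¹ * S + S * Phi a * S) from by abel, e1, e2, e3, e4]
      abel
    rw [key]
    refine PosSemidef.add (PosSemidef.add ?_ ?_) ?_
    · exact hP.posSemidef.mul_mul_conjTranspose_same At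
    · exact myPSD_sum _ fun j =>
        myPSD_smul (ha0 j) ((hR j).posSemidef.mul_mul_conjTranspose_same (E j))
    · exact myPSD_smul hc (myABBA hM Sf Sf hSfh)
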